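/- For the standard Cauchy Lévy density g₀(y) = 1/(π y²), the identity ∫_ℝ (1 − cos(uy)) g₀(y) dy = |u| holds for every u ∈ ℝ; equivalently, exp(∫(cos(uy)−1) g₀(y) dy) = e^{−|u|}, the characteristic function of the standard Cauchy distribution. -/

import Mathlib

open Real MeasureTheory

/-- The Lévy density of the standard Cauchy distribution. -/
noncomputable def g0 (z : ℝ) : ℝ := 1 / (π * z ^ 2)

section CauchyAux
open Set Filter

private lemma cauchyAux_L2 {y : ℝ} (hy : 0 < y) : ∫ t in Ioi (0:ℝ), Real.exp (-(y*t)) = 1/y := by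
  simpa using integral_rpow_mul_exp_neg_mul_Ioi (a := 1) (r := y) one_pos hy

private lemma cauchyAux_L3 {t : ℝ} (ht : 0 < t) : ∫ y in Ioi (0:ℝ), y * Real.exp (-(t*y)) = 1/t^2 := by
  have h := integral_rpow_mul_exp_neg_mul_Ioi (a := 2) (r := t) two_pos ht
  norm_num at h
  rw [one_div]; exact h

-- cauchyAux_L4 : integrability
private lemma cauchyAux_L4 {t : ℝ} (ht : 0 < t) : IntegrableOn (fun y => y * Real.exp (-(t*y))) (Ioi (0:ℝ)) := by
  have h := integrableOn_rpow_mul_exp_neg_mul_rpow (p := 1) (s := 1) (b := t) (by norm_num) one_pos ht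
  refine h.congr_fun (fun x hx => ?_) measurableSet_Ioi
  simp [Real.rpow_one, neg_mul]

-- integrability of exp(-(y*t)) in t
private lemma cauchyAux_L5 {y : ℝ} (hy : 0 < y) : IntegrableOn (fun t => Real.exp (-(y*t))) (Ioi (0:ℝ)) := by
  simpa [neg_mul] using exp_neg_integrableOn_Ioi 0 hy

private lemma cauchyAux_L6 {y : ℝ} (hy : 0 < y) : IntegrableOn (fun t => Real.exp (-(y*t)) * Real.cos t) (Ioi (0:ℝ)) := by
  refine (cauchyAux_L5 hy).mono' ?_ ?_
  · exact (Continuous.aestronglyMeasurable (by continuity))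
  · filter_upwards with x
    rw [norm_mul, Real.norm_eq_abs, Real.norm_eq_abs, abs_exp]
    nlinarith [abs_cos_le_one x, Real.exp_pos (-(y*x))]

private lemma cauchyAux_L1 {y : ℝ} (hy : 0 < y) :
    ∫ t in Ioi (0:ℝ), Real.exp (-(y*t)) * Real.cos t = y/(1+y^2) := by
  have hd : ∀ x ∈ Ici (0:ℝ), HasDerivAt
      (fun t => Real.exp (-(y*t)) * (Real.sin t - y * Real.cos t) / (1+y^2))
      (Real.exp (-(y*x)) * Real.cos x) x := by
    intro x _
    have h1 : HasDerivAt (fun t : ℝ => Real.exp (-(y*t))) (-y * Real.exp (-(y*x))) x := by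
      have := (hasDerivAt_id x).const_mul (-y)
      have h2 := (this.exp)
      simpa [mul_comm, neg_mul] using h2
    have h3 : HasDerivAt (fun t : ℝ => Real.sin t - y * Real.cos t)
        (Real.cos x + y * Real.sin x) x := by
      have := (Real.hasDerivAt_sin x).sub ((Real.hasDerivAt_cos x).const_mul y)
      exact this.congr_deriv (by ring)
    have h4 := (h1.mul h3).div_const (1+y^2)
    refine h4.congr_deriv ?_
    have : (1 : ℝ) + y^2 ≠ 0 := by positivity
    rw [div_eq_iff this]
    ring
  have hint : IntegrableOn (fun t => Real.exp (-(y*t)) * Real.cos t) (Ioi (0:ℝ)) := cauchyAux_L6 hy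
  have hlim : Tendsto (fun t => Real.exp (-(y*t)) * (Real.sin t - y * Real.cos t) / (1+y^2))
      atTop (nhds 0) := by
    have hb : Tendsto (fun t => Real.exp (-(y*t))) atTop (nhds 0) := by
      have hg : Tendsto (fun t : ℝ => y * t) atTop atTop :=
        Filter.Tendsto.const_mul_atTop hy tendsto_id
      exact Real.tendsto_exp_neg_atTop_nhds_zero.comp hg
    have : Tendsto (fun t => Real.exp (-(y*t)) * (Real.sin t - y * Real.cos t)) atTop (nhds 0) := by
      apply squeeze_zero_norm (t₀ := atTop) (a := fun t => Real.exp (-(y*t)) * (1 + y))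
      · intro t
        rw [norm_mul, Real.norm_eq_abs, Real.norm_eq_abs, abs_exp]
        have h1 : |Real.sin t - y * Real.cos t| ≤ 1 + y := by
          calc |Real.sin t - y * Real.cos t| ≤ |Real.sin t| + |y * Real.cos t| := abs_sub _ _
          _ ≤ 1 + y := by
            rw [abs_mul, abs_of_pos hy]
            have := Real.abs_sin_le_one t
            have := Real.abs_cos_le_one t
            nlinarith
        nlinarith [Real.exp_pos (-(y*t))]
      · simpa using hb.mul_const (1+y)
    simpa using this.div_const (1+y^2)
  have := integral_Ioi_of_hasDerivAt_of_tendsto' hd hint hlim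
  rw [this]
  norm_num
  ring

-- integrability of (1-cos t)/t² on Ioi 0
private lemma cauchyAux_L7 : IntegrableOn (fun t : ℝ => (1 - Real.cos t) / t^2) (Ioi (0:ℝ)) := by
  have hmeas : ∀ s : Set ℝ, MeasurableSet s → IntegrableOn (fun t : ℝ => (1 - Real.cos t) / t^2) s → True := fun _ _ _ => trivial
  have hcont : ContinuousOn (fun t : ℝ => (1 - Real.cos t) / t^2) (Ioi (0:ℝ)) := by
    apply ContinuousOn.div
    · exact (continuous_const.sub Real.continuous_cos).continuousOn
    · exact (continuous_pow 2).continuousOn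
    · intro x hx; exact pow_ne_zero 2 (ne_of_gt hx)
  rw [← Ioc_union_Ioi_eq_Ioi (le_of_lt one_pos)]
  apply IntegrableOn.union
  · -- on Ioc 0 1, bounded by 1/2
    apply Integrable.mono' (integrable_const (1/2 : ℝ))
    · exact (hcont.mono Ioc_subset_Ioi_self).aestronglyMeasurable measurableSet_Ioc
    · filter_upwards [ae_restrict_mem measurableSet_Ioc] with x hx
      have hx0 : 0 < x := hx.1
      have h1 : 1 - Real.cos x ≤ x^2/2 := by
        have := Real.one_sub_sq_div_two_le_cos (x := x)
        linarith
      have h2 : 0 ≤ 1 - Real.cos x := by linarith [Real.cos_le_one x]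
      rw [Real.norm_eq_abs, abs_div, abs_of_nonneg h2, abs_of_nonneg (sq_nonneg x)]
      rw [div_le_iff₀ (by positivity)]
      nlinarith
  · -- on Ioi 1, bounded by 2 * x^(-2)
    apply Integrable.mono' ((integrableOn_Ioi_rpow_of_lt (by norm_num : (-2:ℝ) < -1) one_pos).const_mul 2)
    · exact (hcont.mono (Ioi_subset_Ioi (le_of_lt one_pos))).aestronglyMeasurable measurableSet_Ioi
    · filter_upwards [ae_restrict_mem measurableSet_Ioi] with x hx
      have hx1 : (1:ℝ) < x := hx
      have hx0 : (0:ℝ) < x := lt_trans one_pos hx1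
      have h2 : 0 ≤ 1 - Real.cos x := by linarith [Real.cos_le_one x]
      have h3 : 1 - Real.cos x ≤ 2 := by linarith [Real.neg_one_le_cos x]
      rw [Real.norm_eq_abs, abs_div, abs_of_nonneg h2, abs_of_nonneg (sq_nonneg x),
        Real.rpow_neg (le_of_lt hx0)]
      rw [div_le_iff₀ (by positivity)]
      have h4 : (x : ℝ) ^ ((2:ℝ)) = x^2 := by
        rw [← Real.rpow_natCast x 2]; norm_num
      rw [h4]
      rw [mul_assoc, inv_mul_cancel₀ (by positivity : (x:ℝ)^2 ≠ 0), mul_one]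
      exact h3

private lemma cauchyAux_central : ∫ t in Ioi (0:ℝ), (1 - Real.cos t)/t^2 = π/2 := by
  set μ : Measure ℝ := volume.restrict (Ioi (0:ℝ)) with hμ
  set f : ℝ → ℝ → ℝ := fun t y => (1 - Real.cos t) * (y * Real.exp (-(t*y))) with hf
  have hmeas : AEStronglyMeasurable (Function.uncurry f) (μ.prod μ) := by
    apply Continuous.aestronglyMeasurable
    apply Continuous.mul
    · exact (continuous_const.sub (Real.continuous_cos.comp continuous_fst))
    · exact continuous_snd.mul ((continuous_fst.mul continuous_snd).neg.rexp)
  have h1 : ∀ᵐ t ∂μ, Integrable (f t) μ := by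
    filter_upwards [ae_restrict_mem measurableSet_Ioi] with t ht
    exact ((cauchyAux_L4 ht).const_mul _)
  have keyeq : (fun t => ∫ y, f t y ∂μ) =ᵐ[μ] fun t => (1 - Real.cos t)/t^2 := by
    filter_upwards [ae_restrict_mem measurableSet_Ioi] with t ht
    rw [hμ]
    rw [integral_const_mul]
    rw [cauchyAux_L3 ht]
    ring
  have keynorm : (fun t => ∫ y, ‖f t y‖ ∂μ) =ᵐ[μ] fun t => (1 - Real.cos t)/t^2 := by
    filter_upwards [ae_restrict_mem measurableSet_Ioi, keyeq] with t ht heq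
    rw [← heq]
    rw [hμ]
    refine setIntegral_congr_fun measurableSet_Ioi (fun y hy => ?_)
    have h2 : 0 ≤ 1 - Real.cos t := by linarith [Real.cos_le_one t]
    have : (0:ℝ) < y := hy
    rw [Real.norm_eq_abs, abs_of_nonneg (by positivity)]
  have h2 : Integrable (fun t => ∫ y, ‖f t y‖ ∂μ) μ := cauchyAux_L7.congr keynorm.symm
  have hInt : Integrable (Function.uncurry f) (μ.prod μ) := (integrable_prod_iff hmeas).mpr ⟨h1, h2⟩
  have hswap := MeasureTheory.integral_integral_swap hInt
  have hLHS : ∫ t, ∫ y, f t y ∂μ ∂μ = ∫ t in Ioi (0:ℝ), (1 - Real.cos t)/t^2 :=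
    integral_congr_ae keyeq
  have hRHS : ∫ y, ∫ t, f t y ∂μ ∂μ = π/2 := by
    have inner : (fun y => ∫ t, f t y ∂μ) =ᵐ[μ] fun y => (1 + y^2)⁻¹ := by
      filter_upwards [ae_restrict_mem measurableSet_Ioi] with y hy
      have hy0 : (0:ℝ) < y := hy
      rw [hμ]
      have heq : ∀ t : ℝ, f t y = y * (Real.exp (-(y*t)) - Real.exp (-(y*t)) * Real.cos t) := by
        intro t; rw [hf]; simp only; rw [mul_comm t y]; ring
      simp_rw [heq]
      rw [integral_const_mul, integral_sub (cauchyAux_L5 hy0) (cauchyAux_L6 hy0), cauchyAux_L2 hy0, cauchyAux_L1 hy0]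
      have : (1:ℝ) + y^2 ≠ 0 := by positivity
      field_simp
      ring
    rw [integral_congr_ae inner, hμ, integral_Ioi_inv_one_add_sq, Real.arctan_zero, sub_zero]
  rw [← hLHS, hswap, hRHS]

end CauchyAux

open Set in
/-- `∫ (1 − cos(uy)) g₀(y) dy = |u|` for every `u ∈ ℝ`. -/
theorem integral_one_sub_cos_g0 (u : ℝ) :
    ∫ y : ℝ, (1 - Real.cos (u * y)) * g0 y = |u| := by
  rcases eq_or_ne u 0 with rfl | hu
  · simp
  · set c := |u| with hc
    have hc0 : 0 < c := abs_pos.mpr hu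
    have hpt : ∀ y : ℝ, (1 - Real.cos (u * y)) * g0 y
        = (fun t => (1 - Real.cos (c * t)) * g0 t) |y| := by
      intro y
      simp only [g0]
      rw [hc, ← abs_mul, Real.cos_abs, sq_abs]
    rw [show (fun y : ℝ => (1 - Real.cos (u * y)) * g0 y)
        = fun y : ℝ => (fun t => (1 - Real.cos (c * t)) * g0 t) |y| from funext hpt]
    rw [integral_comp_abs (f := fun t => (1 - Real.cos (c * t)) * g0 t)]
    have key : ∫ t in Ioi (0:ℝ), (1 - Real.cos (c * t)) * g0 t = c / 2 := by
      have hg : ∀ t : ℝ, (1 - Real.cos (c * t)) * g0 t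
          = (fun s => (1 - Real.cos s) * (c^2 / (π * s^2))) (c * t) := by
        intro t
        simp only [g0, mul_pow]
        congr 1
        rw [show π * (c^2 * t^2) = c^2 * (π * t^2) by ring,
          ← mul_div_mul_left 1 (π * t^2) (pow_ne_zero 2 hc0.ne'), mul_one]
      rw [show (fun t : ℝ => (1 - Real.cos (c * t)) * g0 t)
          = fun t : ℝ => (fun s => (1 - Real.cos s) * (c^2 / (π * s^2))) (c * t) from funext hg]
      rw [integral_comp_mul_left_Ioi (fun s => (1 - Real.cos s) * (c^2 / (π * s^2))) 0 hc0,
        mul_zero]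
      have : ∫ s in Ioi (0:ℝ), (1 - Real.cos s) * (c^2 / (π * s^2))
          = (c^2/π) * ∫ s in Ioi (0:ℝ), (1 - Real.cos s) / s^2 := by
        rw [← integral_const_mul]
        refine setIntegral_congr_fun measurableSet_Ioi (fun s hs => ?_)
        have : (0:ℝ) < s := hs
        field_simp
      rw [this, cauchyAux_central, smul_eq_mul]
      field_simp
    rw [key]
    ring
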